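/- arXiv:1705.04825 — 4 statements merged into one kernel-verified Lean document; each statement's English description precedes it below -/
import Mathlib

section
/- For positive definite matrices X, A and t ≥ 0, the operator norm of the t-weighted geometric mean satisfies ‖X #_t A‖ ≤ ‖X‖ · ‖X⁻¹‖^t · ‖A‖^t. -/
open MeasureTheory
open scoped ComplexOrder

abbrev Mat (m : ℕ) := Matrix (Fin m) (Fin m) ℂ

noncomputable instance {m : ℕ} : MeasurableSpace (Mat m) := borel _
instance {m : ℕ} : BorelSpace (Mat m) := ⟨rfl⟩

/-- Functional calculus on Hermitian matrices (junk value `A` otherwise). -/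
noncomputable def matFun {m : ℕ} (f : ℝ → ℝ) (A : Mat m) : Mat m :=
  if h : A.IsHermitian then
    (h.eigenvectorUnitary : Mat m) *
      Matrix.diagonal (fun i => (f (h.eigenvalues i) : ℂ)) *
      star (h.eigenvectorUnitary : Mat m)
  else A

/-- Real power `A^t` of a positive definite matrix, via the spectral decomposition. -/
noncomputable def mpow {m : ℕ} (A : Mat m) (t : ℝ) : Mat m := matFun (fun x => x ^ t) A

/-- Logarithm of a positive definite matrix, via the spectral decomposition. -/
noncomputable def mlog {m : ℕ} (A : Mat m) : Mat m := matFun Real.log A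

/-- The operator norm of a matrix (acting on the Euclidean space). -/
noncomputable def opN {m : ℕ} (A : Mat m) : ℝ :=
  ‖(Matrix.toEuclideanCLM (𝕜 := ℂ) A : EuclideanSpace ℂ (Fin m) →L[ℂ] EuclideanSpace ℂ (Fin m))‖

/-- The Frobenius (Hilbert-Schmidt) norm of a matrix. -/
noncomputable def fnorm {m : ℕ} (A : Mat m) : ℝ :=
  Real.sqrt (∑ i, ∑ j, ‖A i j‖ ^ 2)

/-- The Riemannian trace metric distance `d(A,B) = ‖log (A^{-1/2} B A^{-1/2})‖₂`. -/
noncomputable def rdist {m : ℕ} (A B : Mat m) : ℝ :=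
  fnorm (mlog (mpow A (-(1/2 : ℝ)) * B * mpow A (-(1/2 : ℝ))))

/-- The `t`-weighted geometric mean `X #_t A = X^{1/2} (X^{-1/2} A X^{-1/2})^t X^{1/2}`. -/
noncomputable def geom {m : ℕ} (X : Mat m) (t : ℝ) (A : Mat m) : Mat m :=
  mpow X (1/2 : ℝ) * mpow (mpow X (-(1/2 : ℝ)) * A * mpow X (-(1/2 : ℝ))) t * mpow X (1/2 : ℝ)

/-- Finite first moment for a measure on positive definite matrices. -/
def HasFFM {m : ℕ} (μ : Measure (Mat m)) : Prop :=
  ∃ Y : Mat m, Y.PosDef ∧ Integrable (fun A => rdist A Y) μ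

/-- Couplings of two probability measures. -/
def couplings {m : ℕ} (μ ν : Measure (Mat m)) : Set (Measure (Mat m × Mat m)) :=
  {π | IsProbabilityMeasure π ∧ π.map Prod.fst = μ ∧ π.map Prod.snd = ν}

/-- The 1-Wasserstein distance with respect to the Riemannian trace metric. -/
noncomputable def W1 {m : ℕ} (μ ν : Measure (Mat m)) : ℝ :=
  sInf ((fun π : Measure (Mat m × Mat m) => ∫ p, rdist p.1 p.2 ∂π) '' couplings μ ν)

open scoped Matrix.Norms.L2Operator
open scoped Matrix ComplexOrder

lemma matFun_mul {m : ℕ} {X : Mat m} (hX : X.IsHermitian) (f g : ℝ → ℝ) :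
    matFun f X * matFun g X = matFun (fun x => f x * g x) X := by
  simp only [matFun, dif_pos hX]
  have hU : star (hX.eigenvectorUnitary : Mat m) * (hX.eigenvectorUnitary : Mat m) = 1 :=
    Matrix.mem_unitaryGroup_iff'.mp (hX.eigenvectorUnitary).2
  simp only [mul_assoc]
  rw [show star (hX.eigenvectorUnitary : Mat m) * ((hX.eigenvectorUnitary : Mat m) *
      (Matrix.diagonal (fun i => (g (hX.eigenvalues i) : ℂ)) *
        star (hX.eigenvectorUnitary : Mat m))) =
      Matrix.diagonal (fun i => (g (hX.eigenvalues i) : ℂ)) *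
        star (hX.eigenvectorUnitary : Mat m) from by rw [← mul_assoc, hU, one_mul]]
  rw [← mul_assoc (Matrix.diagonal _), Matrix.diagonal_mul_diagonal]
  congr 2
  ext i
  push_cast
  ring

lemma matFun_congr {m : ℕ} {X : Mat m} (hX : X.IsHermitian) (f g : ℝ → ℝ)
    (h : ∀ i, f (hX.eigenvalues i) = g (hX.eigenvalues i)) : matFun f X = matFun g X := by
  simp only [matFun, dif_pos hX]
  have : (fun i => ((f (hX.eigenvalues i)) : ℂ)) = fun i => ((g (hX.eigenvalues i)) : ℂ) :=
    funext fun i => by rw [h i]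
  rw [this]

lemma matFun_id {m : ℕ} {X : Mat m} (hX : X.IsHermitian) : matFun (fun x => x) X = X := by
  simp only [matFun, dif_pos hX]
  exact hX.spectral_theorem.symm

lemma matFun_one {m : ℕ} {X : Mat m} (hX : X.IsHermitian) : matFun (fun _ => 1) X = 1 := by
  simp only [matFun, dif_pos hX]
  rw [show (Matrix.diagonal (fun i : Fin m => ((1:ℝ) : ℂ))) = (1 : Mat m) from by
    simp [Matrix.diagonal_one]]
  rw [mul_one]
  exact Matrix.mem_unitaryGroup_iff.mp (hX.eigenvectorUnitary).2

lemma matFun_isHermitian {m : ℕ} {X : Mat m} (hX : X.IsHermitian) (f : ℝ → ℝ) :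
    (matFun f X).IsHermitian := by
  simp only [matFun, dif_pos hX]
  unfold Matrix.IsHermitian
  simp [Matrix.conjTranspose_mul, Matrix.diagonal_conjTranspose, mul_assoc,
    Matrix.star_eq_conjTranspose, Matrix.conjTranspose_conjTranspose, Pi.star_def,
    Complex.star_def, Complex.conj_ofReal]

lemma norm_one_le_one {m : ℕ} : ‖(1 : Mat m)‖ ≤ 1 := by
  rw [Matrix.cstar_norm_def, map_one, ContinuousLinearMap.one_def]
  exact ContinuousLinearMap.norm_id_le

lemma norm_unitary_le {m : ℕ} (U : Matrix.unitaryGroup (Fin m) ℂ) : ‖(U : Mat m)‖ ≤ 1 := by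
  have h := Matrix.l2_opNorm_conjTranspose_mul_self (U : Mat m)
  have h1 : (U : Mat m)ᴴ * (U : Mat m) = 1 := by
    rw [← Matrix.star_eq_conjTranspose]
    exact Matrix.mem_unitaryGroup_iff'.mp U.2
  rw [h1] at h
  nlinarith [norm_nonneg (U : Mat m), norm_one_le_one (m := m)]

lemma norm_diagonal_le {m : ℕ} (d : Fin m → ℂ) {c : ℝ} (hc : 0 ≤ c)
    (hd : ∀ i, ‖d i‖ ≤ c) : ‖(Matrix.diagonal d : Mat m)‖ ≤ c := by
  rw [Matrix.l2_opNorm_def]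
  refine ContinuousLinearMap.opNorm_le_bound _ hc fun x => ?_
  have happ : ∀ i, ((LinearEquiv.trans Matrix.toEuclideanLin
      LinearMap.toContinuousLinearMap (Matrix.diagonal d)) x) i = d i * x i := by
    intro i
    simp [Matrix.toEuclideanLin_apply, Matrix.mulVec_diagonal]
  rw [EuclideanSpace.norm_eq, EuclideanSpace.norm_eq]
  rw [show c * Real.sqrt (∑ i, ‖x i‖ ^ 2) = Real.sqrt (c ^ 2 * ∑ i, ‖x i‖ ^ 2) by
    rw [Real.sqrt_mul (sq_nonneg c), Real.sqrt_sq hc]]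
  apply Real.sqrt_le_sqrt
  rw [Finset.mul_sum]
  apply Finset.sum_le_sum
  intro i _
  rw [happ i, norm_mul, mul_pow]
  have := hd i
  have h2 : ‖d i‖ ^ 2 ≤ c ^ 2 := by nlinarith [norm_nonneg (d i)]
  nlinarith [sq_nonneg ‖x i‖, norm_nonneg (x i)]

lemma norm_matFun_le {m : ℕ} {X : Mat m} (hX : X.IsHermitian) {f : ℝ → ℝ} {c : ℝ} (hc : 0 ≤ c)
    (hf : ∀ i, |f (hX.eigenvalues i)| ≤ c) : ‖matFun f X‖ ≤ c := by
  simp only [matFun, dif_pos hX]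
  have h1 : ‖(hX.eigenvectorUnitary : Mat m)‖ ≤ 1 := norm_unitary_le _
  have h2 : ‖star (hX.eigenvectorUnitary : Mat m)‖ ≤ 1 := by
    rw [Matrix.star_eq_conjTranspose, Matrix.l2_opNorm_conjTranspose]
    exact h1
  have hD : ‖(Matrix.diagonal (fun i => ((f (hX.eigenvalues i)) : ℂ)) : Mat m)‖ ≤ c := by
    refine norm_diagonal_le _ hc fun i => ?_
    rw [Complex.norm_real]
    exact hf i
  calc ‖(hX.eigenvectorUnitary : Mat m) *
        Matrix.diagonal (fun i => ((f (hX.eigenvalues i)) : ℂ)) *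
        star (hX.eigenvectorUnitary : Mat m)‖
      ≤ ‖(hX.eigenvectorUnitary : Mat m) *
        Matrix.diagonal (fun i => ((f (hX.eigenvalues i)) : ℂ))‖ *
        ‖star (hX.eigenvectorUnitary : Mat m)‖ := Matrix.l2_opNorm_mul _ _
    _ ≤ (‖(hX.eigenvectorUnitary : Mat m)‖ *
        ‖(Matrix.diagonal (fun i => ((f (hX.eigenvalues i)) : ℂ)) : Mat m)‖) *
        ‖star (hX.eigenvectorUnitary : Mat m)‖ := by
        gcongr
        exacts [Matrix.l2_opNorm_mul _ _]
    _ ≤ (1 * c) * 1 := by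
        apply mul_le_mul _ h2 (norm_nonneg _) (by positivity)
        exact mul_le_mul h1 hD (norm_nonneg _) zero_le_one
    _ = c := by ring

lemma eigenvalue_le_norm {m : ℕ} {B : Mat m} (hB : B.IsHermitian) (i : Fin m) :
    hB.eigenvalues i ≤ ‖B‖ := by
  haveI : CompleteSpace (Mat m) := FiniteDimensional.complete ℂ _
  have h1 : hB.eigenvalues i ∈ spectrum ℝ B := hB.eigenvalues_mem_spectrum_real i
  have h2 : ((hB.eigenvalues i : ℝ) : ℂ) ∈ spectrum ℂ B := spectrum.algebraMap_mem ℂ h1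
  have h3 := spectrum.norm_le_norm_mul_of_mem h2
  rw [Complex.norm_real] at h3
  calc hB.eigenvalues i ≤ |hB.eigenvalues i| := le_abs_self _
    _ ≤ ‖B‖ * ‖(1 : Mat m)‖ := h3
    _ ≤ ‖B‖ * 1 := by
        exact mul_le_mul_of_nonneg_left norm_one_le_one (norm_nonneg _)
    _ = ‖B‖ := mul_one _

lemma mpow_half_mul {m : ℕ} {X : Mat m} (hX : X.PosDef) :
    mpow X (1/2 : ℝ) * mpow X (1/2 : ℝ) = X := by
  unfold mpow
  rw [matFun_mul hX.isHermitian]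
  rw [matFun_congr hX.isHermitian _ (fun x => x) fun i => by
    have h := hX.eigenvalues_pos i
    rw [← Real.rpow_add h]
    norm_num]
  exact matFun_id hX.isHermitian

lemma mpow_neg_half_mul {m : ℕ} {X : Mat m} (hX : X.PosDef) :
    mpow X (-(1/2 : ℝ)) * mpow X (-(1/2 : ℝ)) = X⁻¹ := by
  have hmm : mpow X (-(1/2 : ℝ)) * mpow X (-(1/2 : ℝ)) = matFun (fun x => x⁻¹) X := by
    unfold mpow
    rw [matFun_mul hX.isHermitian]
    refine matFun_congr hX.isHermitian _ _ fun i => ?_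
    have h := hX.eigenvalues_pos i
    rw [← Real.rpow_add h]
    norm_num [Real.rpow_neg_one]
  have key : matFun (fun x => x⁻¹) X * X = 1 := by
    nth_rewrite 2 [← matFun_id hX.isHermitian]
    rw [matFun_mul hX.isHermitian]
    rw [matFun_congr hX.isHermitian _ (fun _ => 1) fun i => by
      exact inv_mul_cancel₀ (hX.eigenvalues_pos i).ne']
    exact matFun_one hX.isHermitian
  rw [hmm, Matrix.inv_eq_left_inv key]

set_option maxHeartbeats 2000000 in
theorem normStmt {m : ℕ} (X A : Mat m) (hX : X.PosDef) (hA : A.PosDef) (t : ℝ) (ht : 0 ≤ t) :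
    ‖mpow X (1/2 : ℝ) * mpow (mpow X (-(1/2 : ℝ)) * A * mpow X (-(1/2 : ℝ))) t * mpow X (1/2 : ℝ)‖
      ≤ ‖X‖ * ‖X⁻¹‖ ^ t * ‖A‖ ^ t := by
  set S := mpow X (1/2 : ℝ) with hSdef
  set N := mpow X (-(1/2 : ℝ)) with hNdef
  set M := N * A * N with hMdef
  have hSh : S.IsHermitian := matFun_isHermitian hX.isHermitian _
  have hNh : N.IsHermitian := matFun_isHermitian hX.isHermitian _
  have hM : M.PosSemidef := by
    have := hA.posSemidef.conjTranspose_mul_mul_same N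
    rwa [hNh.eq] at this
  have hSS : ‖S‖ * ‖S‖ = ‖X‖ := by
    rw [← Matrix.l2_opNorm_conjTranspose_mul_self, hSh.eq, mpow_half_mul hX]
  have hNN : ‖N‖ * ‖N‖ = ‖X⁻¹‖ := by
    rw [← Matrix.l2_opNorm_conjTranspose_mul_self, hNh.eq, mpow_neg_half_mul hX]
  have hMle : ‖M‖ ≤ ‖X⁻¹‖ * ‖A‖ := by
    calc ‖N * A * N‖ ≤ ‖N * A‖ * ‖N‖ := Matrix.l2_opNorm_mul _ _
      _ ≤ (‖N‖ * ‖A‖) * ‖N‖ := by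
          gcongr
          exact Matrix.l2_opNorm_mul _ _
      _ = (‖N‖ * ‖N‖) * ‖A‖ := by ring
      _ = ‖X⁻¹‖ * ‖A‖ := by rw [hNN]
  have hPow : ‖mpow M t‖ ≤ ‖M‖ ^ t := by
    refine norm_matFun_le hM.1 (Real.rpow_nonneg (norm_nonneg M) t) fun i => ?_
    rw [abs_of_nonneg (Real.rpow_nonneg (hM.eigenvalues_nonneg i) t)]
    exact Real.rpow_le_rpow (hM.eigenvalues_nonneg i) (eigenvalue_le_norm hM.1 i) ht
  calc ‖S * mpow M t * S‖ ≤ ‖S * mpow M t‖ * ‖S‖ := Matrix.l2_opNorm_mul _ _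
    _ ≤ (‖S‖ * ‖mpow M t‖) * ‖S‖ := by
        gcongr
        exact Matrix.l2_opNorm_mul _ _
    _ = (‖S‖ * ‖S‖) * ‖mpow M t‖ := by ring
    _ = ‖X‖ * ‖mpow M t‖ := by rw [hSS]
    _ ≤ ‖X‖ * ‖M‖ ^ t := by
        exact mul_le_mul_of_nonneg_left hPow (norm_nonneg _)
    _ ≤ ‖X‖ * (‖X⁻¹‖ * ‖A‖) ^ t := by
        gcongr
    _ = ‖X‖ * ‖X⁻¹‖ ^ t * ‖A‖ ^ t := by
        rw [Real.mul_rpow (norm_nonneg _) (norm_nonneg _), mul_assoc]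

/-- `‖X #_t A‖ ≤ ‖X‖ ‖X⁻¹‖^t ‖A‖^t` for positive definite `X, A` and `t ≥ 0`. -/
theorem stmt1 {m : ℕ} (X A : Mat m) (hX : X.PosDef) (hA : A.PosDef) (t : ℝ) (ht : 0 ≤ t) :
    opN (geom X t A) ≤ opN X * opN X⁻¹ ^ t * opN A ^ t := by
  have ho : ∀ B : Mat m, opN B = ‖B‖ := fun _ => rfl
  rw [ho, ho, ho, ho]
  unfold geom
  exact normStmt X A hX hA t ht
end

section
/- For positive definite matrices X, A and t ≥ 0, the inverse of the weighted geometric mean satisfies ‖(X #_t A)⁻¹‖ ≤ ‖X⁻¹‖ · ‖X‖^t · ‖A⁻¹‖^t. -/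
open MeasureTheory
open scoped ComplexOrder

open scoped Matrix.Norms.L2Operator

namespace GeomAux

variable {m : ℕ}

lemma matFun_eq {A : Mat m} (hA : A.IsHermitian) (f : ℝ → ℝ) :
    matFun f A = (hA.eigenvectorUnitary : Mat m) *
      Matrix.diagonal (fun i => (f (hA.eigenvalues i) : ℂ)) *
      star (hA.eigenvectorUnitary : Mat m) := by
  rw [matFun, dif_pos hA]

lemma matFun_congr {A : Mat m} (hA : A.IsHermitian) {f g : ℝ → ℝ}
    (h : ∀ i, f (hA.eigenvalues i) = g (hA.eigenvalues i)) :
    matFun f A = matFun g A := by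
  rw [matFun_eq hA f, matFun_eq hA g]
  have he : (fun i => (f (hA.eigenvalues i) : ℂ)) = fun i => (g (hA.eigenvalues i) : ℂ) :=
    funext fun i => by rw [h i]
  rw [he]

lemma matFun_isHermitian {A : Mat m} (hA : A.IsHermitian) (f : ℝ → ℝ) :
    (matFun f A).IsHermitian := by
  rw [matFun_eq hA f, Matrix.star_eq_conjTranspose]
  exact Matrix.isHermitian_mul_mul_conjTranspose _ <|
    Matrix.isHermitian_diagonal_of_self_adjoint _ <| by
      ext i
      simp [Pi.star_apply, Complex.conj_ofReal]

lemma matFun_mul_matFun {A : Mat m} (hA : A.IsHermitian) (f g : ℝ → ℝ) :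
    matFun f A * matFun g A = matFun (fun x => f x * g x) A := by
  have h1 : star (hA.eigenvectorUnitary : Mat m) * (hA.eigenvectorUnitary : Mat m) = 1 := by
    simpa using unitary.coe_star_mul_self hA.eigenvectorUnitary
  rw [matFun_eq hA f, matFun_eq hA g, matFun_eq hA (fun x => f x * g x)]
  simp only [mul_assoc]
  rw [← mul_assoc (star (hA.eigenvectorUnitary : Mat m)) (hA.eigenvectorUnitary : Mat m), h1,
    one_mul, ← mul_assoc (Matrix.diagonal _) (Matrix.diagonal _), Matrix.diagonal_mul_diagonal]
  congr 2
  ext i j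
  simp

lemma mpow_mul_mpow {A : Mat m} (hA : A.PosDef) (a b : ℝ) :
    mpow A a * mpow A b = mpow A (a + b) := by
  rw [mpow, mpow, mpow, matFun_mul_matFun hA.1]
  exact matFun_congr hA.1 fun i => (Real.rpow_add (hA.eigenvalues_pos i) a b).symm

lemma mpow_zero {A : Mat m} (hA : A.IsHermitian) : mpow A 0 = 1 := by
  have h1 : (hA.eigenvectorUnitary : Mat m) * star (hA.eigenvectorUnitary : Mat m) = 1 := by
    simpa using unitary.coe_mul_star_self hA.eigenvectorUnitary
  rw [mpow, matFun_eq hA]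
  simp only [Real.rpow_zero, Complex.ofReal_one, Matrix.diagonal_one, mul_one, h1]

lemma mpow_one {A : Mat m} (hA : A.IsHermitian) : mpow A 1 = A := by
  rw [mpow]
  have h1 : matFun (fun x => x ^ (1:ℝ)) A = matFun id A :=
    matFun_congr hA fun i => Real.rpow_one _
  rw [h1, matFun_eq hA]
  exact hA.spectral_theorem.symm

lemma mpow_isHermitian {A : Mat m} (hA : A.IsHermitian) (t : ℝ) : (mpow A t).IsHermitian :=
  matFun_isHermitian hA _

lemma inv_eq_mpow_neg_one {A : Mat m} (hA : A.PosDef) : A⁻¹ = mpow A (-1) := by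
  refine Matrix.inv_eq_right_inv ?_
  nth_rewrite 1 [← mpow_one hA.1]
  rw [mpow_mul_mpow hA]
  have h0 : (1:ℝ) + -1 = 0 := by norm_num
  rw [h0]
  exact mpow_zero hA.1

open Matrix in
lemma posDef_conj {B C : Mat m} (hB : B.PosDef) (hC : C.IsHermitian) (hCu : IsUnit C) :
    (C * B * C).PosDef := by
  refine Matrix.posDef_iff_dotProduct_mulVec.mpr ⟨?_, fun x hx => ?_⟩
  · have hCC : C * B * C = Cᴴ * B * C := by rw [hC.eq]
    rw [hCC]
    exact Matrix.isHermitian_conjTranspose_mul_mul C hB.1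
  · have hinj : Function.Injective C.mulVec := Matrix.mulVec_injective_iff_isUnit.mpr hCu
    have hCx : (C *ᵥ x) ≠ 0 := by
      intro h
      exact hx (hinj (by simpa using h))
    have := hB.dotProduct_mulVec_pos hCx
    have hconj : star x ⬝ᵥ (C * B * C) *ᵥ x = star (C *ᵥ x) ⬝ᵥ B *ᵥ (C *ᵥ x) := by
      simp only [star_mulVec, dotProduct_mulVec, vecMul_vecMul, hC.eq]
    rw [hconj]
    exact this

lemma opN_eq (A : Mat m) : opN A = ‖A‖ := rfl

lemma norm_diagonal_le {d : Fin m → ℂ} {c : ℝ} (hc : 0 ≤ c) (h : ∀ i, ‖d i‖ ≤ c) :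
    ‖Matrix.diagonal d‖ ≤ c := by
  rw [Matrix.cstar_norm_def]
  refine ContinuousLinearMap.opNorm_le_bound _ hc fun x => ?_
  have key : ∀ i, (Matrix.toEuclideanCLM (𝕜 := ℂ) (Matrix.diagonal d) x) i = d i * x i := by
    intro i
    have h2 := congrFun (Matrix.ofLp_toEuclideanCLM (𝕜 := ℂ) (Matrix.diagonal d) x) i
    simpa [Matrix.toLin'_apply, Matrix.mulVec_diagonal] using h2
  rw [EuclideanSpace.norm_eq, EuclideanSpace.norm_eq]
  have h1 : ∑ i, ‖(Matrix.toEuclideanCLM (𝕜 := ℂ) (Matrix.diagonal d) x) i‖ ^ 2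
      ≤ ∑ i, c ^ 2 * ‖x i‖ ^ 2 := by
    refine Finset.sum_le_sum fun i _ => ?_
    rw [key i, norm_mul, mul_pow]
    exact mul_le_mul_of_nonneg_right (pow_le_pow_left₀ (norm_nonneg _) (h i) 2) (sq_nonneg _)
  calc Real.sqrt (∑ i, ‖(Matrix.toEuclideanCLM (𝕜 := ℂ) (Matrix.diagonal d) x) i‖ ^ 2)
      ≤ Real.sqrt (∑ i, c ^ 2 * ‖x i‖ ^ 2) := Real.sqrt_le_sqrt h1
    _ = c * Real.sqrt (∑ i, ‖x i‖ ^ 2) := by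
        rw [← Finset.mul_sum, Real.sqrt_mul (sq_nonneg c), Real.sqrt_sq hc]

lemma le_norm_diagonal (d : Fin m → ℂ) (i : Fin m) : ‖d i‖ ≤ ‖Matrix.diagonal d‖ := by
  rw [Matrix.cstar_norm_def]
  have happ : (Matrix.toEuclideanCLM (𝕜 := ℂ) (Matrix.diagonal d)) (EuclideanSpace.single i 1)
      = EuclideanSpace.single i (d i) := by
    refine PiLp.ext fun j => ?_
    have h2 := congrFun (Matrix.ofLp_toEuclideanCLM (𝕜 := ℂ) (Matrix.diagonal d)
      (EuclideanSpace.single i 1)) j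
    rw [h2, Matrix.mulVec_diagonal]
    by_cases hji : j = i <;> simp [hji, EuclideanSpace.single_apply]
  calc ‖d i‖ = ‖(Matrix.toEuclideanCLM (𝕜 := ℂ) (Matrix.diagonal d))
        (EuclideanSpace.single i 1)‖ := by rw [happ, EuclideanSpace.norm_single]
    _ ≤ ‖Matrix.toEuclideanCLM (𝕜 := ℂ) (Matrix.diagonal d)‖ :=
        ContinuousLinearMap.unit_le_opNorm _ _
          (by rw [EuclideanSpace.norm_single, norm_one])

lemma norm_matFun {A : Mat m} (hA : A.IsHermitian) (f : ℝ → ℝ) :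
    ‖matFun f A‖ = ‖Matrix.diagonal (fun i => (f (hA.eigenvalues i) : ℂ))‖ := by
  rw [matFun_eq hA f, ← Unitary.coe_star, CStarRing.norm_mul_coe_unitary,
    CStarRing.norm_coe_unitary_mul]

lemma norm_sq_of_hermitian {A B : Mat m} (hA : A.IsHermitian) (h : A * A = B) :
    ‖A‖ * ‖A‖ = ‖B‖ := by
  rw [← h, ← CStarRing.norm_star_mul_self (x := A)]
  congr 1
  rw [Matrix.star_eq_conjTranspose, hA.eq]

end GeomAux

/-- `‖(X #_t A)⁻¹‖ ≤ ‖X⁻¹‖ ‖X‖^t ‖A⁻¹‖^t` for positive definite `X, A` and `t ≥ 0`. -/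
theorem stmt2 {m : ℕ} (X A : Mat m) (hX : X.PosDef) (hA : A.PosDef) (t : ℝ) (ht : 0 ≤ t) :
    opN (geom X t A)⁻¹ ≤ opN X⁻¹ * opN X ^ t * opN A⁻¹ ^ t := by
  classical
  set S := mpow X (1/2 : ℝ) with hSdef
  set Si := mpow X (-(1/2 : ℝ)) with hSidef
  set M := Si * A * Si with hMdef
  have hSh : S.IsHermitian := GeomAux.mpow_isHermitian hX.1 _
  have hSih : Si.IsHermitian := GeomAux.mpow_isHermitian hX.1 _
  have hSSi : S * Si = 1 := by
    rw [hSdef, hSidef, GeomAux.mpow_mul_mpow hX]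
    have h0 : (1/2 : ℝ) + -(1/2) = 0 := by norm_num
    rw [h0]; exact GeomAux.mpow_zero hX.1
  have hSiS : Si * S = 1 := by
    rw [hSdef, hSidef, GeomAux.mpow_mul_mpow hX]
    have h0 : -(1/2 : ℝ) + (1/2) = 0 := by norm_num
    rw [h0]; exact GeomAux.mpow_zero hX.1
  have hSS : S * S = X := by
    rw [hSdef, GeomAux.mpow_mul_mpow hX]
    have h0 : (1/2 : ℝ) + (1/2) = 1 := by norm_num
    rw [h0]; exact GeomAux.mpow_one hX.1
  have hSiSi : Si * Si = X⁻¹ := by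
    rw [hSidef, GeomAux.mpow_mul_mpow hX]
    have h0 : -(1/2 : ℝ) + -(1/2) = -1 := by norm_num
    rw [h0, ← GeomAux.inv_eq_mpow_neg_one hX]
  have hSiU : IsUnit Si := ⟨⟨Si, S, hSiS, hSSi⟩, rfl⟩
  have hM : M.PosDef := by
    rw [hMdef]; exact GeomAux.posDef_conj hA hSih hSiU
  have hAinv : A * A⁻¹ = 1 :=
    Matrix.mul_nonsing_inv A ((Matrix.isUnit_iff_isUnit_det A).mp hA.isUnit)
  have hPQ : mpow M t * mpow M (-t) = 1 := by
    rw [GeomAux.mpow_mul_mpow hM]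
    have h0 : t + -t = 0 := by ring
    rw [h0]; exact GeomAux.mpow_zero hM.1
  have hgeom : geom X t A = S * mpow M t * S := by
    rw [hMdef, hSdef, hSidef]; rfl
  have hGinv : (geom X t A)⁻¹ = Si * mpow M (-t) * Si := by
    rw [hgeom]
    refine Matrix.inv_eq_right_inv ?_
    simp only [mul_assoc]
    rw [← mul_assoc S Si, hSSi, one_mul, ← mul_assoc (mpow M t) (mpow M (-t)), hPQ, one_mul,
      hSSi]
  have hnSi2 : ‖Si‖ * ‖Si‖ = ‖X⁻¹‖ := GeomAux.norm_sq_of_hermitian hSih hSiSi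
  have hnS2 : ‖S‖ * ‖S‖ = ‖X‖ := GeomAux.norm_sq_of_hermitian hSh hSS
  have hMinv : M⁻¹ = S * A⁻¹ * S := by
    refine Matrix.inv_eq_right_inv ?_
    rw [hMdef]
    simp only [mul_assoc]
    rw [← mul_assoc Si S, hSiS, one_mul, ← mul_assoc A A⁻¹, hAinv, one_mul, hSiS]
  have hμle : ∀ i, (hM.1.eigenvalues i)⁻¹ ≤ ‖M⁻¹‖ := by
    intro i
    have h1 : M⁻¹ = mpow M (-1) := GeomAux.inv_eq_mpow_neg_one hM
    rw [h1, mpow, GeomAux.norm_matFun hM.1]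
    have h2 := GeomAux.le_norm_diagonal
      (fun i => ((hM.1.eigenvalues i ^ (-1 : ℝ) : ℝ) : ℂ)) i
    calc (hM.1.eigenvalues i)⁻¹
        = ‖((hM.1.eigenvalues i ^ (-1 : ℝ) : ℝ) : ℂ)‖ := by
          rw [Real.rpow_neg_one, Complex.norm_real, Real.norm_eq_abs,
            abs_of_nonneg (inv_nonneg.mpr (hM.eigenvalues_pos i).le)]
      _ ≤ _ := h2
  have hkey : ‖mpow M (-t)‖ ≤ ‖M⁻¹‖ ^ t := by
    rw [mpow, GeomAux.norm_matFun hM.1]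
    refine GeomAux.norm_diagonal_le (Real.rpow_nonneg (norm_nonneg _) t) fun i => ?_
    have hpos := hM.eigenvalues_pos i
    show ‖((hM.1.eigenvalues i ^ (-t) : ℝ) : ℂ)‖ ≤ ‖M⁻¹‖ ^ t
    have hval : ‖((hM.1.eigenvalues i ^ (-t) : ℝ) : ℂ)‖ = (hM.1.eigenvalues i)⁻¹ ^ t := by
      rw [Complex.norm_real, Real.norm_eq_abs,
        abs_of_nonneg (Real.rpow_nonneg hpos.le _), Real.rpow_neg hpos.le,
        ← Real.inv_rpow hpos.le]
    rw [hval]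
    exact Real.rpow_le_rpow (inv_nonneg.mpr hpos.le) (hμle i) ht
  have hMinvle : ‖M⁻¹‖ ≤ ‖X‖ * ‖A⁻¹‖ := by
    rw [hMinv]
    calc ‖S * A⁻¹ * S‖ ≤ ‖S * A⁻¹‖ * ‖S‖ := Matrix.l2_opNorm_mul _ _
      _ ≤ ‖S‖ * ‖A⁻¹‖ * ‖S‖ :=
          mul_le_mul_of_nonneg_right (Matrix.l2_opNorm_mul _ _) (norm_nonneg _)
      _ = ‖S‖ * ‖S‖ * ‖A⁻¹‖ := by ring
      _ = ‖X‖ * ‖A⁻¹‖ := by rw [hnS2]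
  calc opN (geom X t A)⁻¹ = ‖Si * mpow M (-t) * Si‖ := by
        rw [GeomAux.opN_eq, hGinv]
    _ ≤ ‖Si * mpow M (-t)‖ * ‖Si‖ := Matrix.l2_opNorm_mul _ _
    _ ≤ ‖Si‖ * ‖mpow M (-t)‖ * ‖Si‖ :=
        mul_le_mul_of_nonneg_right (Matrix.l2_opNorm_mul _ _) (norm_nonneg _)
    _ = ‖Si‖ * ‖Si‖ * ‖mpow M (-t)‖ := by ring
    _ = ‖X⁻¹‖ * ‖mpow M (-t)‖ := by rw [hnSi2]
    _ ≤ ‖X⁻¹‖ * ‖M⁻¹‖ ^ t := mul_le_mul_of_nonneg_left hkey (norm_nonneg _)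
    _ ≤ ‖X⁻¹‖ * (‖X‖ * ‖A⁻¹‖) ^ t :=
        mul_le_mul_of_nonneg_left (Real.rpow_le_rpow (norm_nonneg _) hMinvle ht)
          (norm_nonneg _)
    _ = opN X⁻¹ * opN X ^ t * opN A⁻¹ ^ t := by
        rw [Real.mul_rpow (norm_nonneg _) (norm_nonneg _)]
        simp only [GeomAux.opN_eq]
        ring
end

section
/- For a positive definite matrix X and t ≠ 0, the map f_t(A) = X #_t A on positive definite matrices is a bijection with inverse f_{1/t}; that is, X #_t Z = A if and only if Z = X #_{1/t} A. -/
open MeasureTheory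
open scoped ComplexOrder

lemma u_star_mul {m : ℕ} (U : Matrix.unitaryGroup (Fin m) ℂ) :
    star (U : Mat m) * (U : Mat m) = 1 := U.2.1

lemma u_mul_star {m : ℕ} (U : Matrix.unitaryGroup (Fin m) ℂ) :
    (U : Mat m) * star (U : Mat m) = 1 := U.2.2

/-- Conjugation by a unitary as an algebra equivalence. -/
noncomputable def conjAE {m : ℕ} (U : Matrix.unitaryGroup (Fin m) ℂ) : Mat m ≃ₐ[ℂ] Mat m where
  toFun A := (U : Mat m) * A * star (U : Mat m)
  invFun A := star (U : Mat m) * A * (U : Mat m)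
  left_inv A := by
    simp only [← mul_assoc, u_star_mul, one_mul]
    rw [mul_assoc, u_star_mul, mul_one]
  right_inv A := by
    simp only [← mul_assoc, u_mul_star, one_mul]
    rw [mul_assoc, u_mul_star, mul_one]
  map_mul' A B := by
    simp only [mul_assoc]
    rw [← mul_assoc (star (U : Mat m)) (U : Mat m), u_star_mul, one_mul]
  map_add' A B := by noncomm_ring
  commutes' c := by
    simp [Algebra.algebraMap_eq_smul_one, mul_smul_comm, smul_mul_assoc, u_mul_star]

lemma unitary_conj_isHermitian {m : ℕ} (U : Matrix.unitaryGroup (Fin m) ℂ) (d : Fin m → ℝ) :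
    ((U : Mat m) * Matrix.diagonal (fun i => (d i : ℂ)) * star (U : Mat m)).IsHermitian := by
  have hd : star (Matrix.diagonal (fun i => (d i : ℂ))) = Matrix.diagonal (fun i => (d i : ℂ)) := by
    rw [Matrix.star_eq_conjTranspose, Matrix.diagonal_conjTranspose]
    refine congrArg Matrix.diagonal ?_
    funext i
    exact Complex.conj_ofReal _
  show star _ = _
  simp only [star_mul, star_star, hd, mul_assoc]

lemma matFun_unitary_conj {m : ℕ} (f : ℝ → ℝ) (U : Matrix.unitaryGroup (Fin m) ℂ)
    (d : Fin m → ℝ) :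
    matFun f ((U : Mat m) * Matrix.diagonal (fun i => (d i : ℂ)) * star (U : Mat m)) =
      (U : Mat m) * Matrix.diagonal (fun i => (f (d i) : ℂ)) * star (U : Mat m) := by
  have hM : ((U : Mat m) * Matrix.diagonal (fun i => (d i : ℂ)) * star (U : Mat m)).IsHermitian :=
    unitary_conj_isHermitian U d
  classical
  set s : Finset ℝ := Finset.image d Finset.univ ∪ Finset.image hM.eigenvalues Finset.univ
    with hs
  set p : Polynomial ℝ := Lagrange.interpolate s id f with hp
  have hpe : ∀ x ∈ s, p.eval x = f x := by
    intro x hx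
    exact Lagrange.eval_interpolate_at_node f (Set.injOn_id _) hx
  set q : Polynomial ℂ := p.map Complex.ofRealHom with hq
  have key : ∀ (V : Matrix.unitaryGroup (Fin m) ℂ) (e : Fin m → ℝ), (∀ i, e i ∈ s) →
      Polynomial.aeval
          ((V : Mat m) * Matrix.diagonal (fun i => (e i : ℂ)) * star (V : Mat m)) q
        = (V : Mat m) * Matrix.diagonal (fun i => (f (e i) : ℂ)) * star (V : Mat m) := by
    intro V e he
    have h1 : (V : Mat m) * Matrix.diagonal (fun i => (e i : ℂ)) * star (V : Mat m)
        = (conjAE V).toAlgHom ((Matrix.diagonalAlgHom ℂ) (fun i => (e i : ℂ))) := rfl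
    have hdiag : Polynomial.aeval (fun i => (e i : ℂ)) q = fun i => (f (e i) : ℂ) := by
      funext i
      have h2 := Polynomial.aeval_algHom_apply (Pi.evalAlgHom ℂ (fun _ : Fin m => ℂ) i)
        (fun j => (e j : ℂ)) q
      dsimp [Pi.evalAlgHom] at h2
      rw [show (Polynomial.aeval (fun j => (e j : ℂ)) q) i = Polynomial.eval ((e i : ℂ)) q from h2.symm, hq, Polynomial.eval_map]
      have h3 : ((e i : ℂ)) = Complex.ofRealHom (e i) := rfl
      rw [h3, Polynomial.eval₂_at_apply, hpe _ (he i)]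
      rfl
    rw [h1, Polynomial.aeval_algHom_apply ((conjAE V).toAlgHom),
      Polynomial.aeval_algHom_apply (Matrix.diagonalAlgHom ℂ), hdiag]
    rfl
  have hd : ∀ i, d i ∈ s := fun i =>
    Finset.mem_union_left _ (Finset.mem_image_of_mem _ (Finset.mem_univ i))
  have hev : ∀ i, hM.eigenvalues i ∈ s := fun i =>
    Finset.mem_union_right _ (Finset.mem_image_of_mem _ (Finset.mem_univ i))
  have e1 := key U d hd
  have e2 := key hM.eigenvectorUnitary hM.eigenvalues hev
  have hspec : (U : Mat m) * Matrix.diagonal (fun i => (d i : ℂ)) * star (U : Mat m)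
      = (hM.eigenvectorUnitary : Mat m) *
      Matrix.diagonal (fun i => (hM.eigenvalues i : ℂ)) *
      star (hM.eigenvectorUnitary : Mat m) := hM.spectral_theorem
  rw [matFun, dif_pos hM, ← e1, ← e2]
  exact congrArg (fun N : Mat m => Polynomial.aeval N q) hspec.symm


open scoped Matrix in
lemma diag_congr {m : ℕ} {f g : Fin m → ℂ} (h : ∀ i, f i = g i) :
    Matrix.diagonal f = Matrix.diagonal g := congrArg _ (funext h)

lemma matFun_eq {m : ℕ} {A : Mat m} (hA : A.IsHermitian) (f : ℝ → ℝ) :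
    matFun f A = (hA.eigenvectorUnitary : Mat m) *
      Matrix.diagonal (fun i => (f (hA.eigenvalues i) : ℂ)) *
      star (hA.eigenvectorUnitary : Mat m) := by
  rw [matFun, dif_pos hA]

open scoped Matrix in
lemma posDef_conjT {m : ℕ} {B C : Mat m} (hB : B.PosDef) (hC : IsUnit C) :
    (Cᴴ * B * C).PosDef := by
  refine Matrix.PosDef.of_dotProduct_mulVec_pos (Matrix.isHermitian_conjTranspose_mul_mul C hB.1) fun x hx => ?_
  have hinj := Matrix.mulVec_injective_iff_isUnit.mpr hC
  have hx' : C *ᵥ x ≠ 0 := fun h0 => hx (by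
    apply hinj
    rw [h0, Matrix.mulVec_zero])
  simpa only [Matrix.star_mulVec, Matrix.dotProduct_mulVec, Matrix.vecMul_vecMul]
    using hB.dotProduct_mulVec_pos hx'

open scoped Matrix in
lemma posDef_conj {m : ℕ} {B C : Mat m} (hB : B.PosDef) (hC : IsUnit C) :
    (C * B * Cᴴ).PosDef := by
  simpa only [Matrix.conjTranspose_conjTranspose] using
    posDef_conjT hB ((Matrix.isUnit_conjTranspose C).2 hC)

lemma u_isUnit {m : ℕ} (U : Matrix.unitaryGroup (Fin m) ℂ) : IsUnit (U : Mat m) :=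
  isUnit_iff_exists.2 ⟨star (U : Mat m), u_mul_star U, u_star_mul U⟩

lemma posDef_conj_star {m : ℕ} {B : Mat m} (hB : B.PosDef) (U : Matrix.unitaryGroup (Fin m) ℂ) :
    ((U : Mat m) * B * star (U : Mat m)).PosDef := by
  rw [Matrix.star_eq_conjTranspose]
  exact posDef_conj hB (u_isUnit U)

lemma mpow_posDef {m : ℕ} {A : Mat m} (hA : A.PosDef) (t : ℝ) : (mpow A t).PosDef := by
  rw [mpow, matFun_eq hA.1]
  refine posDef_conj_star ?_ _
  refine Matrix.PosDef.diagonal fun i => ?_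
  exact_mod_cast Complex.zero_lt_real.2 (Real.rpow_pos_of_pos (hA.eigenvalues_pos i) t)

lemma mpow_add {m : ℕ} {A : Mat m} (hA : A.PosDef) (s t : ℝ) :
    mpow A s * mpow A t = mpow A (s + t) := by
  rw [mpow, mpow, mpow, matFun_eq hA.1, matFun_eq hA.1, matFun_eq hA.1]
  simp only [mul_assoc]
  rw [← mul_assoc (star (hA.1.eigenvectorUnitary : Mat m)) (hA.1.eigenvectorUnitary : Mat m),
    u_star_mul, one_mul,
    ← mul_assoc (Matrix.diagonal fun i => ((hA.1.eigenvalues i ^ s : ℝ) : ℂ)),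
    Matrix.diagonal_mul_diagonal,
    diag_congr (g := fun i => ((hA.1.eigenvalues i ^ (s + t) : ℝ) : ℂ)) (fun i => by
      show ((hA.1.eigenvalues i ^ s : ℝ) : ℂ) * ((hA.1.eigenvalues i ^ t : ℝ) : ℂ) = _
      rw [← Complex.ofReal_mul, ← Real.rpow_add (hA.eigenvalues_pos i)])]

lemma mpow_zero {m : ℕ} {A : Mat m} (hA : A.PosDef) : mpow A 0 = 1 := by
  rw [mpow, matFun_eq hA.1,
    diag_congr (g := fun _ => (1 : ℂ)) (fun i => by
      rw [Real.rpow_zero, Complex.ofReal_one]),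
    Matrix.diagonal_one, mul_one, u_mul_star]

lemma mpow_one {m : ℕ} {A : Mat m} (hA : A.PosDef) : mpow A 1 = A := by
  rw [mpow, matFun_eq hA.1,
    diag_congr (g := fun i => ((hA.1.eigenvalues i : ℝ) : ℂ)) (fun i => by
      rw [Real.rpow_one])]
  exact hA.1.spectral_theorem.symm

lemma mpow_mpow {m : ℕ} {A : Mat m} (hA : A.PosDef) (s t : ℝ) :
    mpow (mpow A s) t = mpow A (s * t) := by
  conv_lhs => rw [mpow, mpow, matFun_eq hA.1]
  conv_rhs => rw [mpow, matFun_eq hA.1]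
  rw [matFun_unitary_conj,
    diag_congr (g := fun i => ((hA.1.eigenvalues i ^ (s * t) : ℝ) : ℂ)) (fun i => by
      show (((hA.1.eigenvalues i ^ s) ^ t : ℝ) : ℂ) = _
      rw [← Real.rpow_mul (hA.eigenvalues_pos i).le])]

lemma mpow_mul_neg {m : ℕ} {A : Mat m} (hA : A.PosDef) (s : ℝ) :
    mpow A s * mpow A (-s) = 1 := by
  rw [mpow_add hA, add_neg_cancel, mpow_zero hA]

open scoped Matrix in
lemma mpow_hermitian {m : ℕ} {A : Mat m} (hA : A.PosDef) (s : ℝ) :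
    (mpow A s)ᴴ = mpow A s := (mpow_posDef hA s).1

lemma hPN {m : ℕ} {X : Mat m} (hX : X.PosDef) :
    mpow X (1/2 : ℝ) * mpow X (-(1/2 : ℝ)) = 1 := by
  rw [mpow_add hX, show (1/2 : ℝ) + -(1/2 : ℝ) = 0 by norm_num, mpow_zero hX]

lemma hNP {m : ℕ} {X : Mat m} (hX : X.PosDef) :
    mpow X (-(1/2 : ℝ)) * mpow X (1/2 : ℝ) = 1 := by
  rw [mpow_add hX, show -(1/2 : ℝ) + (1/2 : ℝ) = 0 by norm_num, mpow_zero hX]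

lemma inner_posDef {m : ℕ} {X Z : Mat m} (hX : X.PosDef) (hZ : Z.PosDef) :
    (mpow X (-(1/2 : ℝ)) * Z * mpow X (-(1/2 : ℝ))).PosDef := by
  have h := posDef_conj hZ (mpow_posDef hX (-(1/2 : ℝ))).isUnit
  rwa [mpow_hermitian hX] at h

lemma geom_posDef {m : ℕ} {X Z : Mat m} (hX : X.PosDef) (hZ : Z.PosDef) (t : ℝ) :
    (geom X t Z).PosDef := by
  rw [geom]
  have h := posDef_conj (mpow_posDef (inner_posDef hX hZ) t) (mpow_posDef hX (1/2 : ℝ)).isUnit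
  rwa [mpow_hermitian hX] at h

lemma geom_inv {m : ℕ} {X : Mat m} (hX : X.PosDef) {t : ℝ} (ht : t ≠ 0) {Z A : Mat m}
    (hZ : Z.PosDef) (hA : A.PosDef) (h : geom X t Z = A) : Z = geom X (1/t) A := by
  have hB : (mpow X (-(1/2 : ℝ)) * Z * mpow X (-(1/2 : ℝ))).PosDef := inner_posDef hX hZ
  have hNA : mpow X (-(1/2 : ℝ)) * A * mpow X (-(1/2 : ℝ))
      = mpow (mpow X (-(1/2 : ℝ)) * Z * mpow X (-(1/2 : ℝ))) t := by
    rw [← h, geom]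
    simp only [← mul_assoc]
    rw [hNP hX, one_mul, mul_assoc, hPN hX, mul_one]
  rw [geom, hNA, mpow_mpow hB, mul_one_div_cancel ht, mpow_one hB]
  simp only [← mul_assoc]
  rw [hPN hX, one_mul, mul_assoc, hNP hX, mul_one]


/-- For `t ≠ 0`, `A ↦ X #_t A` is a bijection on positive definite matrices with
inverse `A ↦ X #_{1/t} A`: `X #_t Z = A ↔ Z = X #_{1/t} A`. -/
theorem stmt5 {m : ℕ} (X : Mat m) (hX : X.PosDef) (t : ℝ) (ht : t ≠ 0) :
    Set.BijOn (geom X t) {A : Mat m | A.PosDef} {A : Mat m | A.PosDef} ∧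
    ∀ Z A : Mat m, Z.PosDef → A.PosDef → (geom X t Z = A ↔ Z = geom X (1/t) A) := by
  have fwd : ∀ {s : ℝ}, s ≠ 0 → ∀ {Z A : Mat m}, Z.PosDef → A.PosDef →
      geom X s Z = A → Z = geom X (1/s) A := fun {s} hs {Z A} hZ hA h => geom_inv hX hs hZ hA h
  constructor
  · refine ⟨fun Z hZ => geom_posDef hX hZ t, fun Z1 h1 Z2 h2 heq => ?_, fun A hA => ?_⟩
    · have hA2 : (geom X t Z2).PosDef := geom_posDef hX h2 t
      exact (fwd ht h1 hA2 heq).trans (fwd ht h2 hA2 rfl).symm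
    · refine ⟨geom X (1/t) A, geom_posDef hX hA (1/t), ?_⟩
      have e := fwd (one_div_ne_zero ht) hA (geom_posDef hX hA (1/t)) rfl
      rw [one_div_one_div] at e
      exact e.symm
  · intro Z A hZ hA
    refine ⟨fun h => fwd ht hZ hA h, fun h => ?_⟩
    have e := fwd (one_div_ne_zero ht) hA hZ h.symm
    rw [one_div_one_div] at e
    exact e.symm
end

section
/- For positive definite matrices C, D and s, t ∈ [0,1], d(C #_t D, C #_s D) = |t − s| · d(C, D). -/
open MeasureTheory
open scoped ComplexOrder

namespace Aux
open Matrix Polynomial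
variable {m : ℕ}

lemma posDef_conj {A B : Mat m} (hA : A.PosDef) (hB : IsUnit B) : (Bᴴ * A * B).PosDef := by
  refine Matrix.PosDef.of_dotProduct_mulVec_pos (Matrix.isHermitian_conjTranspose_mul_mul B hA.1) fun x hx => ?_
  have hBx : B *ᵥ x ≠ 0 := by
    intro h
    apply hx
    have : B⁻¹ *ᵥ (B *ᵥ x) = x := by
      rw [Matrix.mulVec_mulVec, Matrix.nonsing_inv_mul B (Matrix.isUnit_iff_isUnit_det B |>.mp hB), Matrix.one_mulVec]
    rw [h, Matrix.mulVec_zero] at this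
    exact this.symm
  simpa only [star_mulVec, Matrix.dotProduct_mulVec, Matrix.vecMul_vecMul] using hA.dotProduct_mulVec_pos hBx

/-- conjugation by the eigenvector unitary of a Hermitian matrix -/
noncomputable def conjU {A : Mat m} (h : A.IsHermitian) (d : Fin m → ℂ) : Mat m :=
  (h.eigenvectorUnitary : Mat m) * Matrix.diagonal d * star (h.eigenvectorUnitary : Mat m)

lemma matFun_eq {A : Mat m} (h : A.IsHermitian) (f : ℝ → ℝ) :
    matFun f A = conjU h (fun i => (f (h.eigenvalues i) : ℂ)) := by
  rw [matFun, dif_pos h]; rfl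

lemma star_mul_self_eigen {A : Mat m} (h : A.IsHermitian) :
    star (h.eigenvectorUnitary : Mat m) * (h.eigenvectorUnitary : Mat m) = 1 :=
  Matrix.mem_unitaryGroup_iff'.mp h.eigenvectorUnitary.2

lemma mul_star_self_eigen {A : Mat m} (h : A.IsHermitian) :
    (h.eigenvectorUnitary : Mat m) * star (h.eigenvectorUnitary : Mat m) = 1 :=
  Matrix.mem_unitaryGroup_iff.mp h.eigenvectorUnitary.2

lemma conjU_mul {A : Mat m} (h : A.IsHermitian) (d e : Fin m → ℂ) :
    conjU h d * conjU h e = conjU h (fun i => d i * e i) := by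
  unfold conjU
  rw [show ∀ X Y Z W V : Mat m, X * Y * Z * (X * W * V) = X * Y * (Z * X) * W * V by
    intros; noncomm_ring, star_mul_self_eigen h, mul_one, ← Matrix.diagonal_mul_diagonal]
  noncomm_ring

lemma conjU_one {A : Mat m} (h : A.IsHermitian) : conjU h (fun _ => 1) = 1 := by
  unfold conjU
  rw [show (Matrix.diagonal (fun _ : Fin m => (1:ℂ))) = 1 from Matrix.diagonal_one, mul_one,
    mul_star_self_eigen h]

lemma conjU_herm {A : Mat m} (h : A.IsHermitian) (r : Fin m → ℝ) :
    (conjU h (fun i => (r i : ℂ))).IsHermitian := by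
  have : star (conjU h (fun i => (r i : ℂ))) = conjU h (fun i => (r i : ℂ)) := by
    unfold conjU
    rw [Matrix.star_mul, Matrix.star_mul, star_star]
    rw [show star (Matrix.diagonal fun i => ((r i : ℂ))) = Matrix.diagonal fun i => ((r i:ℂ)) by
      simp [Matrix.star_eq_conjTranspose, Matrix.diagonal_conjTranspose, Function.comp]]
    rw [mul_assoc]
  rw [Matrix.IsHermitian, ← Matrix.star_eq_conjTranspose]
  exact this

lemma conjU_posDef {A : Mat m} (h : A.IsHermitian) (r : Fin m → ℝ) (hr : ∀ i, 0 < r i) :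
    (conjU h (fun i => (r i : ℂ))).PosDef := by
  have hd : (Matrix.diagonal (fun i => (r i : ℂ))).PosDef := by
    rw [Matrix.posDef_diagonal_iff]
    intro i
    exact_mod_cast hr i
  have hU : IsUnit (star (h.eigenvectorUnitary : Mat m)) :=
    Matrix.isUnit_iff_isUnit_det _ |>.mpr (IsUnit.of_mul_eq_one (h.eigenvectorUnitary : Mat m).det (by rw [← Matrix.det_mul, star_mul_self_eigen h, Matrix.det_one]))
  have key := posDef_conj hd hU
  have e : (star (h.eigenvectorUnitary : Mat m))ᴴ = (h.eigenvectorUnitary : Mat m) := by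
    rw [Matrix.star_eq_conjTranspose, Matrix.conjTranspose_conjTranspose]
  rw [e] at key
  unfold conjU
  exact key

lemma conjU_conjTranspose {A : Mat m} (h : A.IsHermitian) (d : Fin m → ℂ) :
    (conjU h d)ᴴ = conjU h (fun i => star (d i)) := by
  rw [← Matrix.star_eq_conjTranspose]
  unfold conjU
  rw [Matrix.star_mul, Matrix.star_mul, star_star]
  rw [show star (Matrix.diagonal d) = Matrix.diagonal (fun i => star (d i)) by
    rw [Matrix.star_eq_conjTranspose, Matrix.diagonal_conjTranspose]; rfl]
  rw [mul_assoc]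

lemma conjU_trace {A : Mat m} (h : A.IsHermitian) (d : Fin m → ℂ) :
    Matrix.trace (conjU h d) = ∑ i, d i := by
  unfold conjU
  rw [Matrix.trace_mul_comm, ← mul_assoc, star_mul_self_eigen h, one_mul, Matrix.trace_diagonal]

lemma norm_sq_eq_re_star_mul (z : ℂ) : ‖z‖ ^ 2 = (star z * z).re := by
  rw [show star z * z = ((Complex.normSq z : ℝ) : ℂ) by
    rw [Complex.star_def, mul_comm, Complex.mul_conj]]
  rw [Complex.ofReal_re, ← Complex.sq_norm]

lemma fnorm_conjU {A : Mat m} (h : A.IsHermitian) (d : Fin m → ℂ) :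
    fnorm (conjU h d) = Real.sqrt (∑ i, ‖d i‖ ^ 2) := by
  unfold fnorm
  congr 1
  have key : ∀ X : Mat m, ∑ i, ∑ j, ‖X i j‖^2 = (Matrix.trace (Xᴴ * X)).re := by
    intro X
    rw [Matrix.trace, Complex.re_sum, Finset.sum_comm]
    refine Finset.sum_congr rfl fun j _ => ?_
    rw [Matrix.diag, Matrix.mul_apply, Complex.re_sum]
    refine Finset.sum_congr rfl fun i _ => ?_
    rw [Matrix.conjTranspose_apply, ← norm_sq_eq_re_star_mul]
  rw [key, conjU_conjTranspose, conjU_mul, conjU_trace, Complex.re_sum]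
  refine Finset.sum_congr rfl fun i _ => ?_
  exact (norm_sq_eq_re_star_mul (d i)).symm

lemma mpow_eq {A : Mat m} (h : A.IsHermitian) (r : ℝ) :
    mpow A r = conjU h (fun i => ((h.eigenvalues i ^ r : ℝ) : ℂ)) := matFun_eq h _

lemma mlog_eq {A : Mat m} (h : A.IsHermitian) :
    mlog A = conjU h (fun i => ((Real.log (h.eigenvalues i) : ℝ) : ℂ)) := matFun_eq h _

lemma spectral {A : Mat m} (h : A.IsHermitian) :
    A = conjU h (fun i => ((h.eigenvalues i : ℝ) : ℂ)) := by
  unfold conjU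
  convert h.spectral_theorem using 3
  rw [Unitary.conjStarAlgAut_apply]; rfl

lemma mpow_posDef {A : Mat m} (hA : A.PosDef) (r : ℝ) : (mpow A r).PosDef := by
  rw [mpow_eq hA.1]
  exact conjU_posDef hA.1 _ (fun i => Real.rpow_pos_of_pos (hA.eigenvalues_pos i) r)

lemma mpow_herm {A : Mat m} (hA : A.PosDef) (r : ℝ) : (mpow A r)ᴴ = mpow A r := by
  rw [mpow_eq hA.1]
  exact conjU_herm hA.1 _

lemma mpow_neg_half_mul {A : Mat m} (hA : A.PosDef) :
    mpow A (-(1/2:ℝ)) * A * mpow A (-(1/2:ℝ)) = 1 := by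
  have step : mpow A (-(1/2:ℝ)) * A * mpow A (-(1/2:ℝ))
      = conjU hA.1 (fun i => ((hA.1.eigenvalues i ^ (-(1/2):ℝ) : ℝ) : ℂ)) *
        conjU hA.1 (fun i => ((hA.1.eigenvalues i : ℝ) : ℂ)) *
        conjU hA.1 (fun i => ((hA.1.eigenvalues i ^ (-(1/2):ℝ) : ℝ) : ℂ)) := by
    rw [mpow_eq hA.1, ← spectral hA.1]
  rw [step, conjU_mul, conjU_mul]
  convert conjU_one hA.1 using 2
  funext i
  have hp := hA.eigenvalues_pos i
  set x := hA.1.eigenvalues i with hx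
  have h2 : x ^ (-(1/2):ℝ) * x ^ (-(1/2):ℝ) = x⁻¹ := by
    rw [← Real.rpow_add hp]
    norm_num
    exact Real.rpow_neg_one x
  rw [show ((x ^ (-(1/2):ℝ) : ℝ) : ℂ) * (x:ℂ) * ((x ^ (-(1/2):ℝ) : ℝ):ℂ)
      = ((x ^ (-(1/2):ℝ) * x ^ (-(1/2):ℝ) : ℝ) : ℂ) * (x:ℂ) by push_cast; ring]
  rw [h2]
  rw [← Complex.ofReal_mul, inv_mul_cancel₀ (ne_of_gt hp), Complex.ofReal_one]

lemma charpoly_diagonal (d : Fin m → ℂ) :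
    (Matrix.diagonal d).charpoly = ∏ i, (X - C (d i)) := by
  rw [Matrix.charpoly]
  rw [show Matrix.charmatrix (Matrix.diagonal d)
      = Matrix.diagonal (fun i => (X : ℂ[X]) - C (d i)) by
    ext i j
    by_cases hij : i = j
    · subst hij; simp
    · simp [Matrix.charmatrix_apply_ne _ _ _ hij, Matrix.diagonal_apply_ne _ hij]]
  rw [Matrix.det_diagonal]

lemma charpoly_conj {S A : Mat m} (hS : IsUnit S) :
    (S * A * S⁻¹).charpoly = A.charpoly := by
  have hdet : IsUnit S.det := (Matrix.isUnit_iff_isUnit_det S).mp hS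
  have hmap : S.map C * (S⁻¹).map C = 1 := by
    rw [← Matrix.map_mul, Matrix.mul_nonsing_inv S hdet]
    exact Matrix.map_one _ (map_zero C) (map_one C)
  have h1 : Matrix.charmatrix (S * A * S⁻¹)
      = S.map C * Matrix.charmatrix A * (S⁻¹).map C := by
    unfold Matrix.charmatrix
    rw [Matrix.mul_sub, Matrix.sub_mul]
    congr 1
    · rw [← (Matrix.scalar_commute (X : ℂ[X]) (fun r => Commute.all _ _) (S.map C)).eq,
        mul_assoc, hmap, mul_one]
    · simp only [RingHom.mapMatrix_apply]
      rw [Matrix.map_mul, Matrix.map_mul]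
  unfold Matrix.charpoly
  rw [h1, Matrix.det_mul, Matrix.det_mul]
  have hdd : (S.map C).det * ((S⁻¹).map C).det = 1 := by
    rw [← Matrix.det_mul, hmap, Matrix.det_one]
  calc (S.map C).det * (Matrix.charmatrix A).det * ((S⁻¹).map C).det
      = (Matrix.charmatrix A).det * ((S.map C).det * ((S⁻¹).map C).det) := by ring
    _ = (Matrix.charmatrix A).det := by rw [hdd, mul_one]

lemma sum_eq_of_prod_eq {a b : Fin m → ℂ}
    (h : ∏ i, ((X : ℂ[X]) - C (a i)) = ∏ i, ((X : ℂ[X]) - C (b i))) (g : ℂ → ℝ) :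
    ∑ i, g (a i) = ∑ i, g (b i) := by
  have ha : (Finset.univ.val.map a) = (Finset.univ.val.map b) := by
    have h2 := congrArg Polynomial.roots h
    rwa [show ∏ i, ((X:ℂ[X]) - C (a i)) = ((Finset.univ.val.map a).map (fun x => X - C x)).prod by
        rw [Multiset.map_map]; rfl,
      show ∏ i, ((X:ℂ[X]) - C (b i)) = ((Finset.univ.val.map b).map (fun x => X - C x)).prod by
        rw [Multiset.map_map]; rfl,
      Polynomial.roots_multiset_prod_X_sub_C, Polynomial.roots_multiset_prod_X_sub_C] at h2
  calc ∑ i, g (a i) = ((Finset.univ.val.map a).map g).sum := by rw [Multiset.map_map]; rfl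
    _ = ((Finset.univ.val.map b).map g).sum := by rw [ha]
    _ = ∑ i, g (b i) := by rw [Multiset.map_map]; rfl

lemma rdist_eq {A B : Mat m}
    (h : (mpow A (-(1/2:ℝ)) * B * mpow A (-(1/2:ℝ))).IsHermitian) :
    rdist A B = Real.sqrt (∑ i, (Real.log (h.eigenvalues i)) ^ 2) := by
  unfold rdist
  rw [mlog_eq h, fnorm_conjU]
  congr 1
  refine Finset.sum_congr rfl fun i _ => ?_
  rw [Complex.norm_real, Real.norm_eq_abs, sq_abs]

lemma eig_sum_of_similar {M : Mat m} (hM : M.IsHermitian) {S : Mat m} (hS : IsUnit S)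
    (κ : Fin m → ℂ) (hsim : M = S * Matrix.diagonal κ * S⁻¹) (g : ℂ → ℝ) :
    ∑ i, g ((hM.eigenvalues i : ℂ)) = ∑ i, g (κ i) := by
  have hV : IsUnit ((hM.eigenvectorUnitary : Mat m)) :=
    Matrix.isUnit_iff_isUnit_det _ |>.mpr
      (IsUnit.of_mul_eq_one _
        (by rw [← Matrix.det_mul, mul_star_self_eigen hM, Matrix.det_one]))
  have hVinv : ((hM.eigenvectorUnitary : Mat m))⁻¹ = star (hM.eigenvectorUnitary : Mat m) :=
    Matrix.inv_eq_right_inv (mul_star_self_eigen hM)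
  have h1 : M.charpoly = ∏ i, (X - C ((hM.eigenvalues i : ℂ))) := by
    have hMeq : M = (hM.eigenvectorUnitary : Mat m) *
        Matrix.diagonal (fun i => ((hM.eigenvalues i : ℝ) : ℂ)) *
        ((hM.eigenvectorUnitary : Mat m))⁻¹ := by
      rw [hVinv]; exact spectral hM
    conv_lhs => rw [hMeq, charpoly_conj hV, charpoly_diagonal]
  have h2 : M.charpoly = ∏ i, (X - C (κ i)) := by
    rw [hsim, charpoly_conj hS, charpoly_diagonal]
  exact sum_eq_of_prod_eq (by rw [← h1, h2]) g

theorem stmt8' {m : ℕ} (C D : Mat m) (hC : C.PosDef) (hD : D.PosDef) (t s : ℝ) :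
    rdist (geom C t D) (geom C s D) = |t - s| * rdist C D := by
  classical
  set R := mpow C (-(1/2:ℝ)) with hR_def
  have hR : R.PosDef := mpow_posDef hC _
  have hRH : Rᴴ = R := mpow_herm hC _
  set P := mpow C (1/2:ℝ) with hP_def
  have hP : P.PosDef := mpow_posDef hC _
  have hPH : Pᴴ = P := mpow_herm hC _
  set E := R * D * R with hE_def
  have hE : E.PosDef := by
    have h0 := posDef_conj hD hR.isUnit
    rwa [hRH] at h0
  set μ := hE.1.eigenvalues with hmu_def
  have hμ : ∀ i, 0 < μ i := fun i => hE.eigenvalues_pos i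
  set U := (hE.1.eigenvectorUnitary : Mat m) with hU_def
  have hUu : IsUnit U := Matrix.isUnit_iff_isUnit_det _ |>.mpr
    (IsUnit.of_mul_eq_one _
      (by rw [← Matrix.det_mul, mul_star_self_eigen hE.1, Matrix.det_one]))
  have hgeom : ∀ r : ℝ, geom C r D = P * mpow E r * P := fun r => rfl
  have hmpowE : ∀ r : ℝ, mpow E r = U * Matrix.diagonal (fun i => ((μ i ^ r : ℝ) : ℂ)) * star U :=
    fun r => by rw [mpow_eq hE.1]; rfl
  have hXpos : ∀ r : ℝ, (geom C r D).PosDef := by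
    intro r
    rw [hgeom r]
    have h0 := posDef_conj (mpow_posDef hE r) hP.isUnit
    rwa [hPH] at h0
  set Q := mpow (geom C t D) (-(1/2:ℝ)) with hQ_def
  have hQ : Q.PosDef := mpow_posDef (hXpos t) _
  have hQH : Qᴴ = Q := mpow_herm (hXpos t) _
  have hQ1 : Q * geom C t D * Q = 1 := mpow_neg_half_mul (hXpos t)
  set M := Q * geom C s D * Q with hM_def
  have hM : M.PosDef := by
    have h0 := posDef_conj (hXpos s) hQ.isUnit
    rwa [hQH] at h0
  set S := Q * P * U with hS_def
  have hSu : IsUnit S := (hQ.isUnit.mul hP.isUnit).mul hUu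
  have hSH : Sᴴ = star U * (P * Q) := by
    rw [hS_def, Matrix.conjTranspose_mul, Matrix.conjTranspose_mul, hPH, hQH,
      ← Matrix.star_eq_conjTranspose]
  have hkey : ∀ r : ℝ, S * Matrix.diagonal (fun i => ((μ i ^ r : ℝ) : ℂ)) * Sᴴ
      = Q * geom C r D * Q := by
    intro r
    rw [hSH, hgeom r, hmpowE r, hS_def]
    noncomm_ring
  have h1 : S * Matrix.diagonal (fun i => ((μ i ^ t : ℝ) : ℂ)) * Sᴴ = 1 := by
    rw [hkey t]; exact hQ1
  have h2 : M = S * Matrix.diagonal (fun i => ((μ i ^ s : ℝ) : ℂ)) * Sᴴ := by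
    rw [hkey s]
  have hSinv : S⁻¹ = Matrix.diagonal (fun i => ((μ i ^ t : ℝ) : ℂ)) * Sᴴ :=
    Matrix.inv_eq_right_inv (by rw [← mul_assoc]; exact h1)
  set κ : Fin m → ℂ := fun i => ((μ i ^ (s - t) : ℝ) : ℂ) with hk_def
  have hsim : M = S * Matrix.diagonal κ * S⁻¹ := by
    rw [hSinv, h2]
    rw [show S * Matrix.diagonal κ * (Matrix.diagonal (fun i => ((μ i ^ t : ℝ) : ℂ)) * Sᴴ)
        = S * (Matrix.diagonal κ * Matrix.diagonal (fun i => ((μ i ^ t : ℝ) : ℂ))) * Sᴴ by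
      noncomm_ring]
    simp only [Matrix.diagonal_mul_diagonal]
    rw [show (fun i => κ i * ((μ i ^ t : ℝ) : ℂ)) = (fun i => ((μ i ^ s : ℝ) : ℂ)) by
      funext i
      simp only [hk_def]
      rw [← Complex.ofReal_mul, ← Real.rpow_add (hμ i), sub_add_cancel]]
  have hsum := eig_sum_of_similar hM.1 hSu κ hsim (fun z => (Real.log z.re) ^ 2)
  have hMexp : (mpow (geom C t D) (-(1/2:ℝ)) * geom C s D *
      mpow (geom C t D) (-(1/2:ℝ))).IsHermitian := by
    rw [← hQ_def, ← hM_def]; exact hM.1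
  have hEexp : (mpow C (-(1/2:ℝ)) * D * mpow C (-(1/2:ℝ))).IsHermitian := by
    rw [← hR_def, ← hE_def]; exact hE.1
  rw [rdist_eq hMexp, rdist_eq hEexp]
  have hee1 : ∀ (h' : (mpow (geom C t D) (-(1/2:ℝ)) * geom C s D *
      mpow (geom C t D) (-(1/2:ℝ))).IsHermitian), h'.eigenvalues = hM.1.eigenvalues := by
    intro h'
    rfl
  have hee2 : ∀ (h' : (mpow C (-(1/2:ℝ)) * D * mpow C (-(1/2:ℝ))).IsHermitian),
      h'.eigenvalues = μ := by
    intro h'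
    rfl
  rw [hee1 hMexp, hee2 hEexp]
  have hL : ∑ i, (Real.log (hM.1.eigenvalues i)) ^ 2
      = (s - t) ^ 2 * ∑ i, (Real.log (μ i)) ^ 2 := by
    have lhs_eq : ∑ i, (fun z : ℂ => (Real.log z.re) ^ 2) ((hM.1.eigenvalues i : ℂ))
        = ∑ i, (Real.log (hM.1.eigenvalues i)) ^ 2 := by
      refine Finset.sum_congr rfl fun i _ => ?_
      simp
    have rhs_eq : ∑ i, (fun z : ℂ => (Real.log z.re) ^ 2) (κ i)
        = (s - t) ^ 2 * ∑ i, (Real.log (μ i)) ^ 2 := by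
      rw [Finset.mul_sum]
      refine Finset.sum_congr rfl fun i _ => ?_
      rw [hk_def]
      simp only [Complex.ofReal_re]
      rw [Real.log_rpow (hμ i)]
      ring
    rw [← lhs_eq, hsum, rhs_eq]
  rw [hL, Real.sqrt_mul (sq_nonneg _), Real.sqrt_sq_eq_abs, abs_sub_comm]

end Aux

/-- Geodesic speed identity: `d(C #_t D, C #_s D) = |t-s| d(C,D)` for `s, t ∈ [0,1]`. -/
theorem stmt8 {m : ℕ} (C D : Mat m) (hC : C.PosDef) (hD : D.PosDef) (t s : ℝ)
    (ht : t ∈ Set.Icc (0:ℝ) 1) (hs : s ∈ Set.Icc (0:ℝ) 1) :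
    rdist (geom C t D) (geom C s D) = |t - s| * rdist C D :=
  Aux.stmt8' C D hC hD t s
end
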